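/- Let A be an integral domain which is not a field, K its field of fractions, R = A ∝ K the trivial ring extension of A by K, S₀ a multiplicatively closed subset of A, and S = S₀ ∝ K = {(s, e) : s ∈ S₀, e ∈ K}. Then R is an S-Bézout ring if and only if A is an S₀-Bézout ring. -/

import Mathlib

/-- An ideal `I` of a commutative ring `R` is `S`-principal if there exist `s ∈ S`
and `a ∈ R` such that `sI ⊆ aR ⊆ I`. -/
def Ideal.IsSPrincipal {R : Type*} [CommRing R] (S : Set R) (I : Ideal R) : Prop :=
  ∃ s ∈ S, ∃ a : R, (∀ x ∈ I, s * x ∈ Ideal.span {a}) ∧ Ideal.span {a} ≤ I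

/-- A commutative ring `R` is `S`-Bézout if every finitely generated ideal of `R`
is `S`-principal. -/
def IsSBezout (R : Type*) [CommRing R] (S : Set R) : Prop :=
  ∀ I : Ideal R, I.FG → I.IsSPrincipal S

section Aux

variable {A K : Type*} [CommRing A] [AddCommGroup K] [Module A K]
  [Module Aᵐᵒᵖ K] [IsCentralScalar A K]

/-- The first projection as a ring hom. -/
def tszeFstRingHom : TrivSqZeroExt A K →+* A where
  toFun := TrivSqZeroExt.fst
  map_one' := rfl
  map_mul' := fun _ _ => rfl
  map_zero' := rfl
  map_add' := fun _ _ => rfl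

@[simp] lemma tszeFstRingHom_apply (x : TrivSqZeroExt A K) :
    tszeFstRingHom x = x.fst := rfl

lemma tsze_snd_mul' (x y : TrivSqZeroExt A K) :
    (x * y).snd = x.fst • y.snd + y.fst • x.snd := by
  rw [TrivSqZeroExt.snd_mul, op_smul_eq_smul]

end Aux

/-- Let `A` be an integral domain which is not a field, `K` its field of fractions
and `R = A ∝ K` the trivial ring extension. Then `R` is an `(S₀ ∝ K)`-Bézout ring
if and only if `A` is an `S₀`-Bézout ring. -/
theorem sBezout_trivSqZeroExt_fractionRing_iff {A K : Type*} [CommRing A] [IsDomain A]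
    (hA : ¬IsField A) [Field K] [Algebra A K] [IsFractionRing A K]
    [Module Aᵐᵒᵖ K] [IsCentralScalar A K] (S₀ : Submonoid A) :
    IsSBezout (TrivSqZeroExt A K) {x : TrivSqZeroExt A K | x.fst ∈ S₀} ↔
      IsSBezout A S₀ := by
  have hinj : Function.Injective (algebraMap A K) := IsFractionRing.injective A K
  constructor
  · -- R S-Bézout → A S₀-Bézout
    intro hR I hI
    classical
    obtain ⟨T, hT⟩ := hI
    set J : Ideal (TrivSqZeroExt A K) :=
      Ideal.span ((TrivSqZeroExt.inlHom A K) '' (T : Set A)) with hJ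
    have hJfg : J.FG := by
      refine ⟨T.image (TrivSqZeroExt.inlHom A K), ?_⟩
      rw [Finset.coe_image, hJ]
    obtain ⟨σ, hσ, α, h1, h2⟩ := hR J hJfg
    refine ⟨σ.fst, hσ, α.fst, ?_, ?_⟩
    · intro x hx
      have hxJ : TrivSqZeroExt.inl x ∈ J := by
        have hmem : TrivSqZeroExt.inl x ∈ Ideal.map (TrivSqZeroExt.inlHom A K) I :=
          Ideal.mem_map_of_mem _ hx
        rwa [← hT, Ideal.map_span] at hmem
      have h3 := h1 _ hxJ
      rw [Ideal.mem_span_singleton] at h3 ⊢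
      obtain ⟨β, hβ⟩ := h3
      refine ⟨β.fst, ?_⟩
      have := congrArg TrivSqZeroExt.fst hβ
      simpa [TrivSqZeroExt.fst_mul] using this
    · rw [Ideal.span_le, Set.singleton_subset_iff]
      have hα : α ∈ J := h2 (Ideal.mem_span_singleton_self α)
      have hmap : Ideal.map (tszeFstRingHom (A := A) (K := K)) J = I := by
        rw [hJ, Ideal.map_span, ← Set.image_comp, ← hT]
        congr 1
        ext a
        constructor
        · rintro ⟨b, hb, rfl⟩; exact hb
        · intro ha; exact ⟨a, ha, rfl⟩
      have : tszeFstRingHom α ∈ Ideal.map (tszeFstRingHom (A := A) (K := K)) J :=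
        Ideal.mem_map_of_mem _ hα
      rwa [hmap] at this
  · -- A S₀-Bézout → R S-Bézout
    intro hA0 J hJ
    by_cases hcase : ∀ z ∈ J, TrivSqZeroExt.fst z = 0
    · -- Case 1: J ⊆ 0 ∝ K
      obtain ⟨T, hT⟩ := hJ
      obtain ⟨d, hd⟩ := IsLocalization.exist_integer_multiples (nonZeroDivisors A) T
        (fun z => TrivSqZeroExt.snd z)
      have hdK : algebraMap A K (d : A) ≠ 0 :=
        IsFractionRing.to_map_ne_zero_of_mem_nonZeroDivisors d.prop
      classical
      set g : TrivSqZeroExt A K → A := fun z =>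
        if h : IsLocalization.IsInteger A ((d : A) • TrivSqZeroExt.snd z) then h.choose
        else 0 with hg
      have hgT : ∀ z ∈ T, algebraMap A K (g z) = (d : A) • TrivSqZeroExt.snd z := by
        intro z hz
        have h := hd z hz
        rw [hg]
        simp only [dif_pos h]
        exact h.choose_spec
      set I : Ideal A := Ideal.span (T.image g : Set A) with hI
      -- every element of I gives an element of J
      have hIJ : ∀ a ∈ I, TrivSqZeroExt.inr
          ((algebraMap A K (d : A))⁻¹ * algebraMap A K a) ∈ J := by
        intro a ha
        induction ha using Submodule.span_induction with
        | mem x hx =>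
          obtain ⟨z, hz, rfl⟩ := Finset.mem_image.mp (by exact_mod_cast hx)
          have heq : (algebraMap A K (d : A))⁻¹ * algebraMap A K (g z) =
              TrivSqZeroExt.snd z := by
            rw [hgT z hz, Algebra.smul_def]
            field_simp
          rw [heq]
          have hzJ : z ∈ J := hT ▸ Ideal.subset_span hz
          have : TrivSqZeroExt.inr (TrivSqZeroExt.snd z) = z := by
            ext
            · rw [TrivSqZeroExt.fst_inr]; exact (hcase z hzJ).symm
            · rw [TrivSqZeroExt.snd_inr]
          rwa [this]
        | zero => simpa using J.zero_mem
        | add x y hx hy ihx ihy =>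
          rw [map_add, mul_add, TrivSqZeroExt.inr_add]
          exact J.add_mem ihx ihy
        | smul r x hx ih =>
          have heq : TrivSqZeroExt.inr ((algebraMap A K (d : A))⁻¹ * algebraMap A K (r • x)) =
              TrivSqZeroExt.inl r *
                TrivSqZeroExt.inr ((algebraMap A K (d : A))⁻¹ * algebraMap A K x) := by
            rw [smul_eq_mul, map_mul, TrivSqZeroExt.inl_mul_inr, Algebra.smul_def]
            congr 1
            ring
          rw [heq]
          exact J.mul_mem_left _ ih
      -- every element of J gives an element of I
      have hJI : ∀ z ∈ J, ∃ a ∈ I,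
          algebraMap A K a = algebraMap A K (d : A) * TrivSqZeroExt.snd z := by
        intro z hz
        rw [← hT] at hz
        induction hz using Submodule.span_induction with
        | mem x hx =>
          refine ⟨g x, Ideal.subset_span (Finset.mem_coe.mpr (Finset.mem_image_of_mem g hx)), ?_⟩
          rw [hgT x hx, Algebra.smul_def]
        | zero => exact ⟨0, I.zero_mem, by simp⟩
        | add x y hx hy ihx ihy =>
          obtain ⟨a, ha, hae⟩ := ihx
          obtain ⟨b, hb, hbe⟩ := ihy
          exact ⟨a + b, I.add_mem ha hb, by rw [map_add, hae, hbe,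
            TrivSqZeroExt.snd_add, mul_add]⟩
        | smul r x hx ih =>
          obtain ⟨a, ha, hae⟩ := ih
          have hxfst : TrivSqZeroExt.fst x = 0 := hcase x (hT ▸ hx)
          refine ⟨r.fst * a, I.mul_mem_left _ ha, ?_⟩
          rw [smul_eq_mul, tsze_snd_mul', hxfst, zero_smul, add_zero,
            map_mul, hae, Algebra.smul_def]
          ring
      have hIfg : I.FG := ⟨T.image g, rfl⟩
      obtain ⟨s, hs, b, hb1, hb2⟩ := hA0 I hIfg
      refine ⟨TrivSqZeroExt.inl s, by simpa using hs,
        TrivSqZeroExt.inr ((algebraMap A K (d : A))⁻¹ * algebraMap A K b), ?_, ?_⟩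
      · intro z hz
        obtain ⟨a, ha, hae⟩ := hJI z hz
        have hsa := hb1 a ha
        rw [Ideal.mem_span_singleton] at hsa ⊢
        obtain ⟨c, hc⟩ := hsa
        refine ⟨TrivSqZeroExt.inl c, ?_⟩
        ext
        · simp [TrivSqZeroExt.fst_mul, hcase z hz]
        · rw [tsze_snd_mul', tsze_snd_mul']
          simp only [TrivSqZeroExt.fst_inl, TrivSqZeroExt.snd_inl, TrivSqZeroExt.fst_inr,
            TrivSqZeroExt.snd_inr, smul_zero, zero_smul, add_zero, zero_add]
          rw [Algebra.smul_def, Algebra.smul_def]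
          have hzsnd : TrivSqZeroExt.snd z =
              (algebraMap A K (d : A))⁻¹ * algebraMap A K a := by
            field_simp [hae]
            rw [hae]; ring
          rw [hzsnd]
          field_simp
          rw [← map_mul, ← map_mul, hc, mul_comm b c]
      · rw [Ideal.span_le, Set.singleton_subset_iff]
        exact hIJ b (hb2 (Ideal.mem_span_singleton_self b))
    · -- Case 2: some element of J has nonzero first component
      push_neg at hcase
      obtain ⟨z₀, hz₀J, hz₀⟩ := hcase
      set f := tszeFstRingHom (A := A) (K := K) with hf
      have hfsurj : Function.Surjective f := fun a => ⟨TrivSqZeroExt.inl a, rfl⟩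
      set I : Ideal A := Ideal.map f J with hI
      have hIfg : I.FG := Ideal.FG.map hJ f
      -- inr K ⊆ J
      have hinrJ : ∀ k : K, TrivSqZeroExt.inr k ∈ J := by
        intro k
        have h0 : algebraMap A K z₀.fst ≠ 0 := fun h => hz₀ (hinj (by simpa using h))
        have : z₀ * TrivSqZeroExt.inr ((algebraMap A K z₀.fst)⁻¹ * k)
            = TrivSqZeroExt.inr k := by
          ext
          · simp [TrivSqZeroExt.fst_mul]
          · rw [tsze_snd_mul']
            simp only [TrivSqZeroExt.fst_inr, TrivSqZeroExt.snd_inr, zero_smul, add_zero,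
              TrivSqZeroExt.snd_inr]
            rw [Algebra.smul_def]
            field_simp
        rw [← this]
        exact J.mul_mem_right _ hz₀J
      -- membership criterion for J
      have hmemJ : ∀ z : TrivSqZeroExt A K, z.fst ∈ I → z ∈ J := by
        intro z hz
        obtain ⟨w, hwJ, hw⟩ := (Ideal.mem_map_iff_of_surjective f hfsurj).mp hz
        have : z = w + TrivSqZeroExt.inr (z.snd - w.snd) := by
          ext
          · simp only [TrivSqZeroExt.fst_add, TrivSqZeroExt.fst_inr, add_zero]
            exact hw.symm
          · simp [TrivSqZeroExt.snd_add, TrivSqZeroExt.snd_inr]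
        rw [this]
        exact J.add_mem hwJ (hinrJ _)
      obtain ⟨s, hs, b, hb1, hb2⟩ := hA0 I hIfg
      by_cases hb : b = 0
      · -- then s = 0, the trivial witness works
        have hs0 : s = 0 := by
          have := hb1 z₀.fst (Ideal.mem_map_of_mem f hz₀J)
          rw [hb, Ideal.mem_span_singleton, zero_dvd_iff] at this
          rcases mul_eq_zero.mp this with h | h
          · exact h
          · exact absurd h hz₀
        refine ⟨0, by simpa [← hs0] using hs, 0, ?_, ?_⟩
        · intro x hx
          rw [zero_mul]
          exact Ideal.zero_mem _
        · rw [Ideal.span_le, Set.singleton_subset_iff]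
          exact J.zero_mem
      · have hbK : algebraMap A K b ≠ 0 := fun h => hb (hinj (by simpa using h))
        refine ⟨TrivSqZeroExt.inl s, by simpa using hs, TrivSqZeroExt.inl b, ?_, ?_⟩
        · intro z hz
          have hsz := hb1 z.fst (Ideal.mem_map_of_mem f hz)
          rw [Ideal.mem_span_singleton] at hsz ⊢
          obtain ⟨c, hc⟩ := hsz
          refine ⟨TrivSqZeroExt.inl c + TrivSqZeroExt.inr
            ((algebraMap A K b)⁻¹ * (algebraMap A K s * z.snd)), ?_⟩
          ext
          · simpa [TrivSqZeroExt.fst_mul] using hc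
          · rw [tsze_snd_mul', tsze_snd_mul']
            simp only [TrivSqZeroExt.fst_inl, TrivSqZeroExt.snd_inl, TrivSqZeroExt.fst_add,
              TrivSqZeroExt.snd_add, TrivSqZeroExt.fst_inr, TrivSqZeroExt.snd_inr,
              smul_zero, zero_smul, add_zero, zero_add]
            rw [Algebra.smul_def, Algebra.smul_def]
            field_simp
        · rw [Ideal.span_le, Set.singleton_subset_iff]
          exact hmemJ _ (by simpa using hb2 (Ideal.mem_span_singleton_self b))
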